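/- Let E be a real inner product space, let Δ : E → E and let g : E → ℝ be a convex function such that g has gradient Δ(x) at every point x ∈ E, with g(x) ≥ 0 for all x and g(0) = 0. Fix ρ ∈ (0,1], an integer j ≥ 1, and a sequence y : ℕ → E; write ȳ : ℤ → E for the zero-extension of y (ȳ_m = y_m for m ≥ 0 and ȳ_m = 0 for m < 0). Then for every T ∈ ℕ, ∑_{k=0}^{T} ρ^{-2k} ⟨Δ(y_k), y_k − ρ^{2j} ȳ_{k−j}⟩ ≥ 0. -/

import Mathlib

open RealInnerProductSpace

private lemma zf_grad_ineq {E : Type*} [NormedAddCommGroup E] [InnerProductSpace ℝ E]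
    {g : E → ℝ} {Δ : E → E}
    (hconv : ConvexOn ℝ Set.univ g)
    (hgrad : ∀ x : E, HasFDerivAt g (innerSL ℝ (Δ x)) x)
    (x z : E) : g x + ⟪Δ x, z - x⟫ ≤ g z := by
  set φ : ℝ → ℝ := fun t => g (t • (z - x) + x) with hφ
  have hφconv : ConvexOn ℝ Set.univ φ := by
    have h := hconv.comp_affineMap (AffineMap.lineMap x z : ℝ →ᵃ[ℝ] E)
    simp only [Set.preimage_univ] at h
    have heq : φ = g ∘ (AffineMap.lineMap x z : ℝ →ᵃ[ℝ] E) := by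
      funext t
      simp only [hφ, Function.comp_apply, AffineMap.lineMap_apply_module]
      congr 1
      module
    rwa [heq]
  have hline : HasDerivAt (fun t : ℝ => t • (z - x) + x) (z - x) 0 := by
    simpa using ((hasDerivAt_id (0 : ℝ)).smul_const (z - x)).add_const x
  have hgx : HasFDerivAt g (innerSL ℝ (Δ x)) ((fun t : ℝ => t • (z - x) + x) 0) := by
    simpa using hgrad x
  have hφd : HasDerivAt φ ⟪Δ x, z - x⟫ 0 := by
    have h := hgx.comp_hasDerivAt 0 hline
    rw [hφ]
    exact h
  have hslope := hφconv.le_slope_of_hasDerivAt (Set.mem_univ (0 : ℝ))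
    (Set.mem_univ (1 : ℝ)) one_pos hφd
  rw [slope_def_field] at hslope
  have h0 : φ 0 = g x := by simp [hφ]
  have h1 : φ 1 = g z := by simp [hφ]
  rw [h0, h1] at hslope
  simp only [sub_zero, div_one] at hslope
  linarith

/-- Off-by-`j` Zames–Falb ρ-IQC (time domain) for a monotone gradient nonlinearity:
every partial sum of the weighted IQC expression is nonnegative. Here `⟪·, ·⟫` is the
real inner product of `E` and `ybar` is the zero-extension of `y` to `ℤ`. -/
theorem off_by_j_zames_falb_rho_iqc
    {E : Type*} [NormedAddCommGroup E] [InnerProductSpace ℝ E]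
    (Δ : E → E) (g : E → ℝ)
    (hconv : ConvexOn ℝ Set.univ g)
    (hgrad : ∀ x : E, HasFDerivAt g (innerSL ℝ (Δ x)) x)
    (hg_nonneg : ∀ x : E, 0 ≤ g x) (hg_zero : g 0 = 0)
    (ρ : ℝ) (hρ : ρ ∈ Set.Ioc (0 : ℝ) 1)
    (j : ℕ) (hj : 1 ≤ j)
    (y : ℕ → E) (ybar : ℤ → E)
    (hybar_nat : ∀ m : ℕ, ybar (m : ℤ) = y m)
    (hybar_neg : ∀ m : ℤ, m < 0 → ybar m = 0)
    (T : ℕ) :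
    0 ≤ ∑ k ∈ Finset.range (T + 1),
        ρ ^ (-(2 * (k : ℤ))) *
          ⟪Δ (y k), y k - ρ ^ (2 * j) • ybar ((k : ℤ) - (j : ℤ))⟫ := by
  obtain ⟨hρ0, hρ1⟩ := hρ
  have hρne : ρ ≠ 0 := ne_of_gt hρ0
  -- weight positivity
  have hzpow : ∀ m : ℤ, 0 < ρ ^ m := fun m => zpow_pos hρ0 m
  -- A : the weighted g-values over ℤ
  set A : ℤ → ℝ := fun m => ρ ^ (-(2 * m)) * g (ybar m) with hA
  have hA_nonneg : ∀ m : ℤ, 0 ≤ A m := fun m =>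
    mul_nonneg (le_of_lt (hzpow _)) (hg_nonneg _)
  have hA_neg : ∀ m : ℤ, m < 0 → A m = 0 := by
    intro m hm; simp [hA, hybar_neg m hm, hg_zero]
  -- ρ^(2j) ∈ [0,1]
  have hs0 : (0 : ℝ) ≤ ρ ^ (2 * j) := le_of_lt (pow_pos hρ0 _)
  have hs1 : ρ ^ (2 * j) ≤ 1 := pow_le_one₀ (le_of_lt hρ0) hρ1
  -- pointwise bound: each term ≥ A k - A (k - j)
  have key : ∀ k : ℕ,
      A (k : ℤ) - A ((k : ℤ) - (j : ℤ)) ≤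
        ρ ^ (-(2 * (k : ℤ))) *
          ⟪Δ (y k), y k - ρ ^ (2 * j) • ybar ((k : ℤ) - (j : ℤ))⟫ := by
    intro k
    set v := ybar ((k : ℤ) - (j : ℤ)) with hv
    set zk := ρ ^ (2 * j) • v with hzk
    -- gradient inequality
    have h1 := zf_grad_ineq hconv hgrad (y k) zk
    have hinner : g (y k) - g zk ≤ ⟪Δ (y k), y k - zk⟫ := by
      have : ⟪Δ (y k), zk - y k⟫ = -⟪Δ (y k), y k - zk⟫ := by
        rw [← inner_neg_right, neg_sub]
      rw [this] at h1; linarith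
    -- convexity scaling: g (a • v) ≤ a * g v for a ∈ [0,1]
    have hscale : g zk ≤ ρ ^ (2 * j) * g v := by
      have hc := hconv.2 (Set.mem_univ v) (Set.mem_univ (0 : E)) hs0
        (by linarith : (0 : ℝ) ≤ 1 - ρ ^ (2 * j)) (by ring)
      simpa [hg_zero, hzk] using hc
    have hgk : A (k : ℤ) - ρ ^ (-(2 * (k : ℤ))) * (ρ ^ (2 * j) * g v) ≤
        ρ ^ (-(2 * (k : ℤ))) * ⟪Δ (y k), y k - zk⟫ := by
      have := mul_le_mul_of_nonneg_left hinner (le_of_lt (hzpow (-(2 * (k : ℤ)))))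
      have hAy : A (k : ℤ) = ρ ^ (-(2 * (k : ℤ))) * g (y k) := by
        simp [hA, hybar_nat k]
      have h2 := mul_le_mul_of_nonneg_left hscale (le_of_lt (hzpow (-(2 * (k : ℤ)))))
      rw [hAy]; linarith [this, h2]
    have hx : ρ ^ (-(2 * (k : ℤ))) * (ρ ^ (2 * j) * g v) =
        A ((k : ℤ) - (j : ℤ)) := by
      simp only [hA, ← hv]
      rw [← mul_assoc]
      congr 1
      rw [← zpow_natCast ρ (2 * j), ← zpow_add₀ hρne]
      congr 1
      push_cast
      ring
    rw [hx] at hgk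
    exact hgk
  -- sum the pointwise bounds
  have hsum : ∑ k ∈ Finset.range (T + 1), (A (k : ℤ) - A ((k : ℤ) - (j : ℤ))) ≤
      ∑ k ∈ Finset.range (T + 1),
        ρ ^ (-(2 * (k : ℤ))) *
          ⟪Δ (y k), y k - ρ ^ (2 * j) • ybar ((k : ℤ) - (j : ℤ))⟫ :=
    Finset.sum_le_sum fun k _ => key k
  refine le_trans ?_ hsum
  rw [Finset.sum_sub_distrib, sub_nonneg]
  -- ∑ A(k-j) ≤ ∑ A(k)
  have hB : ∀ k : ℕ, A ((k : ℤ) - (j : ℤ)) =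
      if j ≤ k then A ((k - j : ℕ) : ℤ) else 0 := by
    intro k
    by_cases h : j ≤ k
    · rw [if_pos h]; congr 1; omega
    · rw [if_neg h]; exact hA_neg _ (by omega)
  calc ∑ k ∈ Finset.range (T + 1), A ((k : ℤ) - (j : ℤ))
      = ∑ k ∈ (Finset.range (T + 1)).filter (fun k => j ≤ k), A ((k - j : ℕ) : ℤ) := by
        rw [Finset.sum_filter]
        exact Finset.sum_congr rfl fun k _ => hB k
    _ = ∑ m ∈ ((Finset.range (T + 1)).filter (fun k => j ≤ k)).image (· - j),
          A ((m : ℤ)) := by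
        rw [Finset.sum_image]
        intro a ha b hb hab
        simp only [Finset.coe_filter, Finset.mem_range, Set.mem_setOf_eq] at ha hb hab
        omega
    _ ≤ ∑ k ∈ Finset.range (T + 1), A (k : ℤ) := by
        apply Finset.sum_le_sum_of_subset_of_nonneg
        · intro m hm
          simp only [Finset.mem_image, Finset.mem_filter, Finset.mem_range] at hm ⊢
          omega
        · intro m _ _; exact hA_nonneg _
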